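/- Let b be a standard Gaussian random vector in ℝ^d and let x, y be unit vectors in ℝ^d. Then the probability that both ⟨b, x⟩ > 0 and ⟨b, y⟩ > 0 equals (π − arccos(⟨x, y⟩)) / (2π). -/

import Mathlib

open MeasureTheory ProbabilityTheory

namespace Stmt5Aux

open Real Set Filter

noncomputable section


/-- Standard gaussian pi measure as density against Lebesgue. -/
lemma gauss_pi_eq (d : ℕ) :
    Measure.pi (fun _ : Fin d => gaussianReal 0 1) =
      (volume : Measure (Fin d → ℝ)).withDensity
        (fun b => ENNReal.ofReal (∏ i, gaussianPDFReal 0 1 (b i))) := by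
  refine Measure.pi_eq fun s hs => ?_
  rw [withDensity_apply _ (MeasurableSet.univ_pi hs),
    ← ofReal_integral_eq_lintegral_ofReal
      ((Integrable.fintype_prod (f := fun _ : Fin d => gaussianPDFReal 0 1)
        (fun _ => integrable_gaussianPDFReal 0 1)).integrableOn (μ := volume))
      (ae_of_all _ fun b => Finset.prod_nonneg fun i _ => gaussianPDFReal_nonneg 0 1 (b i))]
  have h1 : ∫ b in Set.pi univ s, ∏ i, gaussianPDFReal 0 1 (b i)
      = ∏ i, ∫ t in s i, gaussianPDFReal 0 1 t := by
    rw [← integral_indicator (MeasurableSet.univ_pi hs)]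
    have : (Set.pi univ s).indicator (fun b => ∏ i, gaussianPDFReal 0 1 (b i))
        = fun b => ∏ i, (s i).indicator (gaussianPDFReal 0 1) (b i) := by
      funext b
      by_cases hb : b ∈ Set.pi univ s
      · rw [Set.indicator_of_mem hb]
        exact Finset.prod_congr rfl fun i _ =>
          (Set.indicator_of_mem (hb i (Set.mem_univ i)) _).symm
      · rw [Set.indicator_of_notMem hb]
        obtain ⟨i, hi⟩ := by simpa [Set.mem_pi] using hb
        exact (Finset.prod_eq_zero (Finset.mem_univ i)
          (by rw [Set.indicator_of_notMem hi])).symm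
    rw [this, volume_pi, MeasureTheory.integral_fintype_prod_eq_prod
      (f := fun i : Fin d => (s i).indicator (gaussianPDFReal 0 1))]
    exact Finset.prod_congr rfl fun i _ => integral_indicator (hs i)
  rw [h1, ENNReal.ofReal_prod_of_nonneg fun i _ =>
    integral_nonneg fun t => gaussianPDFReal_nonneg 0 1 t]
  exact Finset.prod_congr rfl fun i _ => (gaussianReal_apply_eq_integral 0 one_ne_zero (s i)).symm



lemma prod_pdf_eq (d : ℕ) (b : EuclideanSpace ℝ (Fin d)) :
    ∏ i, gaussianPDFReal 0 1 (b i) = (√(2 * π))⁻¹ ^ d * rexp (-‖b‖ ^ 2 / 2) := by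
  have hb : ‖b‖ ^ 2 = ∑ i, b i ^ 2 := by
    rw [EuclideanSpace.norm_eq, sq_sqrt (by positivity)]
    simp [sq_abs]
  simp only [gaussianPDFReal, NNReal.coe_one, mul_one, sub_zero]
  rw [Finset.prod_mul_distrib, Finset.prod_const, ← Real.exp_sum, Finset.card_univ,
    Fintype.card_fin]
  congr 1
  simp_rw [neg_div]
  rw [Finset.sum_neg_distrib, ← Finset.sum_div, hb]

def Lf {d : ℕ} (L : EuclideanSpace ℝ (Fin d) ≃ₗᵢ[ℝ] EuclideanSpace ℝ (Fin d)) :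
    (Fin d → ℝ) → (Fin d → ℝ) := fun v => WithLp.ofLp (L (WithLp.toLp 2 v))

lemma gauss_rot {d : ℕ} (L : EuclideanSpace ℝ (Fin d) ≃ₗᵢ[ℝ] EuclideanSpace ℝ (Fin d))
    {S : Set (Fin d → ℝ)} (hS : MeasurableSet S) :
    Measure.pi (fun _ : Fin d => gaussianReal 0 1) (Lf L ⁻¹' S)
      = Measure.pi (fun _ : Fin d => gaussianReal 0 1) S := by
  have hmp : MeasurePreserving (Lf L) (volume : Measure (Fin d → ℝ))
      (volume : Measure (Fin d → ℝ)) :=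
    (PiLp.volume_preserving_ofLp (Fin d)).comp
      (L.measurePreserving.comp (PiLp.volume_preserving_toLp (Fin d)))
  have hemb : MeasurableEmbedding (Lf L) :=
    (MeasurableEquiv.toLp 2 (Fin d → ℝ)).symm.measurableEmbedding.comp
      (L.toHomeomorph.measurableEmbedding.comp
        (MeasurableEquiv.toLp 2 (Fin d → ℝ)).measurableEmbedding)
  have key : ∀ (T : Set (Fin d → ℝ)), MeasurableSet T →
      Measure.pi (fun _ : Fin d => gaussianReal 0 1) T
        = ∫⁻ a in T, ENNReal.ofReal (∏ i, gaussianPDFReal 0 1 (a i))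
            ∂(volume : Measure (Fin d → ℝ)) := by
    intro T hT; rw [gauss_pi_eq, withDensity_apply _ hT]
  rw [key _ hS, key (Lf L ⁻¹' S) (hS.preimage hmp.measurable)]
  calc ∫⁻ a in Lf L ⁻¹' S, ENNReal.ofReal (∏ i, gaussianPDFReal 0 1 (a i))
        ∂(volume : Measure (Fin d → ℝ))
      = ∫⁻ a in Lf L ⁻¹' S, ENNReal.ofReal (∏ i, gaussianPDFReal 0 1 (Lf L a i))
        ∂(volume : Measure (Fin d → ℝ)) := by
        refine setLIntegral_congr_fun (hS.preimage hmp.measurable) (fun a _ => ?_)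
        have : ∏ i, gaussianPDFReal 0 1 (Lf L a i) = ∏ i, gaussianPDFReal 0 1 (a i) := by
          rw [Lf, prod_pdf_eq d (L (WithLp.toLp 2 a)), prod_pdf_eq d (WithLp.toLp 2 a), L.norm_map]
        rw [this]
    _ = ∫⁻ a in S, ENNReal.ofReal (∏ i, gaussianPDFReal 0 1 (a i))
        ∂(volume : Measure (Fin d → ℝ)) :=
        hmp.setLIntegral_comp_preimage_emb hemb
          (fun a => ENNReal.ofReal (∏ i, gaussianPDFReal 0 1 (a i))) S



lemma gauss_one {d : ℕ} (i : Fin d) :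
    (Measure.pi fun _ : Fin d => gaussianReal 0 1).map (fun c => c i)
      = gaussianReal 0 1 := by
  ext s hs
  rw [Measure.map_apply (measurable_pi_apply i) hs]
  classical
  have hset : (fun c : Fin d → ℝ => c i) ⁻¹' s
      = Set.pi univ (fun k => if k = i then s else univ) := by
    ext c
    simp only [Set.mem_preimage, Set.mem_pi, Set.mem_univ, forall_true_left]
    constructor
    · intro h k
      by_cases hk : k = i
      · subst hk; simpa using h
      · simp [hk]
    · intro h
      have := h i
      simpa using this
  rw [hset, Measure.pi_pi]
  rw [← Finset.prod_subset (Finset.subset_univ {i})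
    (fun k _ hk => by
      have : k ≠ i := by simpa using hk
      simp [this])]
  simp

lemma gauss_pair {d : ℕ} {i j : Fin d} (hij : i ≠ j) :
    (Measure.pi fun _ : Fin d => gaussianReal 0 1).map (fun c => (c i, c j))
      = (gaussianReal 0 1).prod (gaussianReal 0 1) := by
  symm
  refine Measure.prod_eq fun s t hs ht => ?_
  rw [Measure.map_apply ((measurable_pi_apply i).prodMk (measurable_pi_apply j)) (hs.prod ht)]
  classical
  have hset : (fun c : Fin d → ℝ => (c i, c j)) ⁻¹' (s ×ˢ t)
      = Set.pi univ (fun k => if k = i then s else if k = j then t else univ) := by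
    ext c
    simp only [Set.mem_preimage, Set.mem_prod, Set.mem_pi, Set.mem_univ, forall_true_left]
    constructor
    · rintro ⟨h1, h2⟩ k
      by_cases hk : k = i
      · subst hk; simpa using h1
      · by_cases hk' : k = j
        · subst hk'; simp [hk, h2]
        · simp [hk, hk']
    · intro h
      refine ⟨by simpa using h i, ?_⟩
      have := h j
      simpa [hij.symm] using this
  rw [hset, Measure.pi_pi]
  rw [← Finset.prod_subset (Finset.subset_univ {i, j})
    (fun k _ hk => by
      have h1 : k ≠ i := by rintro rfl; simp at hk
      have h2 : k ≠ j := by rintro rfl; simp at hk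
      simp [h1, h2])]
  rw [Finset.prod_pair hij]
  simp [hij.symm]

lemma gauss2_eq :
    (gaussianReal 0 1).prod (gaussianReal 0 1)
      = (volume : Measure (ℝ × ℝ)).withDensity
          (fun p => ENNReal.ofReal (gaussianPDFReal 0 1 p.1 * gaussianPDFReal 0 1 p.2)) := by
  refine Measure.prod_eq fun s t hs ht => ?_
  rw [withDensity_apply _ (hs.prod ht), Measure.volume_eq_prod, ← Measure.prod_restrict]
  have hsplitf : ∀ p : ℝ × ℝ,
      ENNReal.ofReal (gaussianPDFReal 0 1 p.1 * gaussianPDFReal 0 1 p.2)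
        = ENNReal.ofReal (gaussianPDFReal 0 1 p.1) * ENNReal.ofReal (gaussianPDFReal 0 1 p.2) :=
    fun p => ENNReal.ofReal_mul (gaussianPDFReal_nonneg 0 1 p.1)
  simp only [hsplitf]
  rw [lintegral_prod_mul
    ((measurable_gaussianPDFReal 0 1).ennreal_ofReal.aemeasurable)
    ((measurable_gaussianPDFReal 0 1).ennreal_ofReal.aemeasurable)]
  rw [gaussianReal_apply 0 one_ne_zero s, gaussianReal_apply 0 one_ne_zero t]
  rfl

lemma gauss_half : gaussianReal 0 1 (Set.Ioi (0 : ℝ)) = ENNReal.ofReal (1 / 2) := by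
  have hneg : (gaussianReal 0 1).map (fun x : ℝ => -x) = gaussianReal 0 1 := by
    have h := gaussianReal_map_const_mul (μ := 0) (v := 1) (-1)
    have h2 : (fun x : ℝ => -1 * x) = (fun x : ℝ => -x) := by funext x; ring
    rw [h2] at h
    rw [h]
    congr 1
    · ring
    · ext
      norm_num
  have hIio : gaussianReal 0 1 (Set.Iio (0 : ℝ)) = gaussianReal 0 1 (Set.Ioi (0 : ℝ)) := by
    conv_lhs => rw [← hneg]
    rw [Measure.map_apply measurable_neg measurableSet_Iio]
    congr 1
    ext x
    simp
  have h0 : gaussianReal 0 1 ({0} : Set ℝ) = 0 :=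
    gaussianReal_absolutelyContinuous 0 one_ne_zero (measure_singleton 0)
  have hc : gaussianReal 0 1 (Set.Iio 0 ∪ Set.Ioi 0) = 1 := by
    rw [Set.Iio_union_Ioi, measure_compl (measurableSet_singleton 0) (measure_ne_top _ _), h0,
      measure_univ, tsub_zero]
  rw [measure_union ((Set.Iic_disjoint_Ioi le_rfl).mono_left Set.Iio_subset_Iic_self) measurableSet_Ioi, hIio] at hc
  have h2 : gaussianReal 0 1 (Set.Ioi (0:ℝ)) = 1 / 2 :=
    (ENNReal.eq_div_iff two_ne_zero ENNReal.ofNat_ne_top).mpr (by rw [two_mul, hc])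
  rw [h2]
  rw [show (1:ℝ)/2 = ((2:ℝ))⁻¹ by norm_num, ENNReal.ofReal_inv_of_pos two_pos,
    ENNReal.ofReal_ofNat]
  rw [one_div]



lemma int_r : ∫ r in Set.Ioi (0:ℝ), r * rexp (-r ^ 2 / 2) = 1 := by
  have hderiv : ∀ r ∈ Set.Ici (0:ℝ),
      HasDerivAt (fun u : ℝ => -rexp (-u ^ 2 / 2)) (r * rexp (-r ^ 2 / 2)) r := by
    intro r _
    have h1 : HasDerivAt (fun u : ℝ => -u ^ 2 / 2) (-r) r := by
      have := ((hasDerivAt_pow 2 r).neg).div_const 2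
      refine this.congr_deriv ?_
      push_cast
      ring
    have h2 := (Real.hasDerivAt_exp (-r ^ 2 / 2)).comp r h1
    have h3 := h2.neg
    refine h3.congr_deriv ?_
    simp [Function.comp]
    ring
  have hint : IntegrableOn (fun r : ℝ => r * rexp (-r ^ 2 / 2)) (Set.Ioi 0) := by
    have := integrableOn_rpow_mul_exp_neg_mul_sq (b := 1/2) (by norm_num) (s := 1) (by norm_num)
    refine this.congr_fun (fun x _ => ?_) measurableSet_Ioi
    simp only [Real.rpow_one]
    ring_nf
  have htend : Tendsto (fun u : ℝ => -rexp (-u ^ 2 / 2)) atTop (nhds 0) := by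
    rw [show (0:ℝ) = -0 by norm_num]
    apply Tendsto.neg
    apply Real.tendsto_exp_atBot.comp
    have h1 : Tendsto (fun u : ℝ => u ^ 2 / 2) atTop atTop :=
      (tendsto_pow_atTop two_ne_zero).atTop_div_const (by norm_num)
    have := tendsto_neg_atTop_atBot.comp h1
    convert this using 1
    funext u
    simp [Function.comp, neg_div]
  have := integral_Ioi_of_hasDerivAt_of_tendsto' hderiv hint htend
  rw [this]
  norm_num

lemma trig_iff {ρ θ : ℝ} (hρ1 : -1 < ρ) (hρ2 : ρ < 1) (hθ1 : -π < θ) (hθ2 : θ < π) :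
    (0 < Real.cos θ ∧ 0 < ρ * Real.cos θ + Real.sqrt (1 - ρ ^ 2) * Real.sin θ)
      ↔ Real.arccos ρ - π / 2 < θ ∧ θ < π / 2 := by
  set α := Real.arccos ρ with hα
  have hα0 : 0 < α := Real.arccos_pos.mpr hρ2
  have hαπ : α < π := lt_of_le_of_ne (Real.arccos_le_pi ρ)
    (fun h => absurd (Real.arccos_eq_pi.mp h) (by linarith))
  have hpi := Real.pi_pos
  have key : ρ * Real.cos θ + Real.sqrt (1 - ρ ^ 2) * Real.sin θ = Real.cos (θ - α) := by
    rw [Real.cos_sub, hα, Real.cos_arccos hρ1.le hρ2.le, Real.sin_arccos]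
    ring
  rw [key]
  constructor
  · rintro ⟨h1, h2⟩
    have hθlt : θ < π / 2 := by
      by_contra h
      push_neg at h
      exact absurd h1 (not_lt.mpr (Real.cos_nonpos_of_pi_div_two_le_of_le h (by linarith)))
    have hθgt : -(π / 2) < θ := by
      by_contra h
      push_neg at h
      have : Real.cos θ ≤ 0 := by
        rw [← Real.cos_neg]
        exact Real.cos_nonpos_of_pi_div_two_le_of_le (by linarith) (by linarith)
      exact absurd h1 (not_lt.mpr this)
    refine ⟨?_, hθlt⟩
    by_contra h
    push_neg at h
    have : Real.cos (θ - α) ≤ 0 := by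
      rw [← Real.cos_neg]
      exact Real.cos_nonpos_of_pi_div_two_le_of_le (by linarith) (by linarith)
    exact absurd h2 (not_lt.mpr this)
  · rintro ⟨h1, h2⟩
    constructor
    · exact Real.cos_pos_of_mem_Ioo ⟨by linarith, h2⟩
    · exact Real.cos_pos_of_mem_Ioo ⟨by linarith, by linarith⟩




lemma int2 {ρ : ℝ} (hρ1 : -1 < ρ) (hρ2 : ρ < 1) :
    ((gaussianReal 0 1).prod (gaussianReal 0 1))
      {p : ℝ × ℝ | 0 < p.1 ∧ 0 < ρ * p.1 + Real.sqrt (1 - ρ ^ 2) * p.2}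
      = ENNReal.ofReal ((π - Real.arccos ρ) / (2 * π)) := by
  set α := Real.arccos ρ with hα
  have hα0 : 0 < α := Real.arccos_pos.mpr hρ2
  have hαπ : α < π := lt_of_le_of_ne (Real.arccos_le_pi ρ)
    (fun h => absurd (Real.arccos_eq_pi.mp h) (by linarith))
  have hpi := Real.pi_pos
  set s := Real.sqrt (1 - ρ ^ 2) with hs
  set A : Set (ℝ × ℝ) := {p : ℝ × ℝ | 0 < p.1 ∧ 0 < ρ * p.1 + s * p.2} with hAdef
  have hA : MeasurableSet A := by
    have : A = {p : ℝ × ℝ | 0 < p.1} ∩ {p : ℝ × ℝ | 0 < ρ * p.1 + s * p.2} := rfl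
    rw [this]
    exact (measurableSet_lt measurable_const measurable_fst).inter
      (measurableSet_lt measurable_const (by fun_prop))
  have hInt : IntegrableOn (fun p : ℝ × ℝ => gaussianPDFReal 0 1 p.1 * gaussianPDFReal 0 1 p.2)
      A volume := by
    have : Integrable (fun p : ℝ × ℝ => gaussianPDFReal 0 1 p.1 * gaussianPDFReal 0 1 p.2)
        volume := by
      rw [Measure.volume_eq_prod]
      exact (integrable_gaussianPDFReal 0 1).mul_prod (integrable_gaussianPDFReal 0 1)
    exact this.integrableOn
  rw [gauss2_eq, withDensity_apply _ hA,
    ← ofReal_integral_eq_lintegral_ofReal hInt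
      (ae_of_all _ fun p => mul_nonneg (gaussianPDFReal_nonneg 0 1 _)
        (gaussianPDFReal_nonneg 0 1 _))]
  congr 1
  have hpdf : ∀ t : ℝ, gaussianPDFReal 0 1 t = (√(2 * π))⁻¹ * rexp (-t ^ 2 / 2) := by
    intro t
    simp [gaussianPDFReal]
  set F : ℝ × ℝ → ℝ := A.indicator (fun p => (2 * π)⁻¹ * rexp (-(p.1 ^ 2 + p.2 ^ 2) / 2))
    with hF
  have step1 : ∫ p in A, gaussianPDFReal 0 1 p.1 * gaussianPDFReal 0 1 p.2 = ∫ p, F p := by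
    rw [hF, ← integral_indicator hA]
    congr 1
    funext p
    by_cases hp : p ∈ A
    · rw [Set.indicator_of_mem hp, Set.indicator_of_mem hp, hpdf, hpdf,
        show -(p.1 ^ 2 + p.2 ^ 2) / 2 = -p.1 ^ 2 / 2 + -p.2 ^ 2 / 2 by ring, Real.exp_add,
        show ((2:ℝ) * π)⁻¹ = (√(2 * π))⁻¹ * (√(2 * π))⁻¹ by
          rw [← mul_inv, Real.mul_self_sqrt (by positivity)]]
      ring
    · rw [Set.indicator_of_notMem hp, Set.indicator_of_notMem hp]
  rw [step1, ← integral_comp_polarCoord_symm F]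
  have step2 : ∫ p in polarCoord.target, p.1 • F (polarCoord.symm p)
      = ∫ p in Set.Ioi (0:ℝ) ×ˢ Set.Ioo (-π) π,
          (p.1 * ((2 * π)⁻¹ * rexp (-p.1 ^ 2 / 2)))
            * (Set.Ioo (α - π / 2) (π / 2)).indicator (fun _ => (1:ℝ)) p.2 := by
    rw [polarCoord_target]
    refine setIntegral_congr_fun (measurableSet_Ioi.prod measurableSet_Ioo) (fun p hp => ?_)
    obtain ⟨hp1, hp2⟩ := hp
    have hp1' : (0:ℝ) < p.1 := hp1
    have hfac : ∀ u : ℝ, (0 < p.1 * u ↔ 0 < u) :=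
      fun u => ⟨fun h => by nlinarith, fun h => mul_pos hp1' h⟩
    have hsymm : polarCoord.symm p = (p.1 * Real.cos p.2, p.1 * Real.sin p.2) := rfl
    have hiff : polarCoord.symm p ∈ A ↔ (α - π / 2 < p.2 ∧ p.2 < π / 2) := by
      rw [hsymm, hAdef]
      simp only [Set.mem_setOf_eq]
      rw [show ρ * (p.1 * Real.cos p.2) + s * (p.1 * Real.sin p.2)
          = p.1 * (ρ * Real.cos p.2 + s * Real.sin p.2) by ring, hfac, hfac]
      exact trig_iff hρ1 hρ2 hp2.1 hp2.2
    have hsq : (p.1 * Real.cos p.2) ^ 2 + (p.1 * Real.sin p.2) ^ 2 = p.1 ^ 2 := by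
      have h := Real.sin_sq_add_cos_sq p.2
      nlinarith [h]
    by_cases hm : α - π / 2 < p.2 ∧ p.2 < π / 2
    · rw [hF, Set.indicator_of_mem (hiff.mpr hm), Set.indicator_of_mem (Set.mem_Ioo.mpr hm)]
      rw [hsymm]
      simp only [smul_eq_mul]
      rw [hsq]
      ring
    · rw [hF, Set.indicator_of_notMem (fun h => hm (hiff.mp h)),
        Set.indicator_of_notMem (fun h => hm (Set.mem_Ioo.mp h))]
      simp
  have step3 := setIntegral_prod_mul (μ := (volume : Measure ℝ)) (ν := (volume : Measure ℝ))
    (fun r : ℝ => r * ((2 * π)⁻¹ * rexp (-r ^ 2 / 2)))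
    ((Set.Ioo (α - π / 2) (π / 2)).indicator (fun _ => (1:ℝ)))
    (Set.Ioi (0:ℝ)) (Set.Ioo (-π) π)
  rw [← Measure.volume_eq_prod] at step3
  rw [step2, step3]
  have hfirst : ∫ r in Set.Ioi (0:ℝ), r * ((2 * π)⁻¹ * rexp (-r ^ 2 / 2)) = (2 * π)⁻¹ := by
    have : ∀ r : ℝ, r * ((2 * π)⁻¹ * rexp (-r ^ 2 / 2))
        = (2 * π)⁻¹ * (r * rexp (-r ^ 2 / 2)) := fun r => by ring
    simp only [this]
    rw [integral_const_mul, int_r, mul_one]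
  have hsecond : ∫ θ in Set.Ioo (-π) π,
      (Set.Ioo (α - π / 2) (π / 2)).indicator (fun _ => (1:ℝ)) θ = π - α := by
    rw [setIntegral_indicator measurableSet_Ioo,
      Set.inter_eq_self_of_subset_right (Set.Ioo_subset_Ioo (by linarith) (by linarith)),
      setIntegral_const, Real.volume_real_Ioo_of_le (by linarith), smul_eq_mul,
      mul_one]
    ring
  rw [hfirst, hsecond]
  field_simp


end
end Stmt5Aux

open Stmt5Aux Real Set in
theorem stmt_5 (d : ℕ) (x y : Fin d → ℝ)
    (hx : ∑ i, x i ^ 2 = 1) (hy : ∑ i, y i ^ 2 = 1) :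
    (Measure.pi fun _ : Fin d => gaussianReal 0 1)
      {b : Fin d → ℝ | 0 < ∑ i, b i * x i ∧ 0 < ∑ i, b i * y i} =
    ENNReal.ofReal ((Real.pi - Real.arccos (∑ i, x i * y i)) / (2 * Real.pi)) := by
  classical
  have hpi := Real.pi_pos
  let x' : EuclideanSpace ℝ (Fin d) := WithLp.toLp 2 x
  let y' : EuclideanSpace ℝ (Fin d) := WithLp.toLp 2 y
  have hnx : ‖x'‖ = 1 := by
    rw [EuclideanSpace.norm_eq]
    simp only [Real.norm_eq_abs, sq_abs]
    show √(∑ i, x i ^ 2) = 1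
    rw [hx, Real.sqrt_one]
  have hny : ‖y'‖ = 1 := by
    rw [EuclideanSpace.norm_eq]
    simp only [Real.norm_eq_abs, sq_abs]
    show √(∑ i, y i ^ 2) = 1
    rw [hy, Real.sqrt_one]
  have hinner : ∀ a b : EuclideanSpace ℝ (Fin d), (inner ℝ a b) = ∑ i, a i * b i := by
    intro a b
    rw [PiLp.inner_apply]
    simp [RCLike.inner_apply]
    exact Finset.sum_congr rfl fun i _ => mul_comm _ _
  have habs : |∑ i, x i * y i| ≤ 1 := by
    have := abs_real_inner_le_norm x' y'
    rw [hinner, hnx, hny] at this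
    simpa using this
  have hS : MeasurableSet {b : Fin d → ℝ | 0 < ∑ i, b i * x i ∧ 0 < ∑ i, b i * y i} := by
    have : {b : Fin d → ℝ | 0 < ∑ i, b i * x i ∧ 0 < ∑ i, b i * y i}
        = {b : Fin d → ℝ | 0 < ∑ i, b i * x i} ∩ {b : Fin d → ℝ | 0 < ∑ i, b i * y i} := rfl
    rw [this]
    exact (measurableSet_lt measurable_const (by fun_prop)).inter
      (measurableSet_lt measurable_const (by fun_prop))
  rcases eq_or_lt_of_le (abs_le.mp habs).2 with h1 | hlt1
  · -- ρ = 1 : x = y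
    have hxy : x' = y' := by
      rw [← inner_eq_one_iff_of_norm_eq_one (𝕜 := ℝ) hnx hny, hinner]
      exact h1
    have hyx : y = x := congrArg (fun v : EuclideanSpace ℝ (Fin d) => (v : Fin d → ℝ)) hxy.symm
    rw [h1, Real.arccos_one]
    have hset : {b : Fin d → ℝ | 0 < ∑ i, b i * x i ∧ 0 < ∑ i, b i * y i}
        = {b : Fin d → ℝ | 0 < ∑ i, b i * x i} := by
      ext b; simp [hyx]
    rw [hset]
    -- d ≥ 1
    have hd : d ≠ 0 := by
      rintro rfl
      simp at hx
    have i0 : Fin d := ⟨0, Nat.pos_of_ne_zero hd⟩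
    -- orthonormal basis with B i0 = x'
    have hON : Orthonormal ℝ (Set.restrict {i0} (fun _ : Fin d => x')) := by
      constructor
      · intro i; exact hnx
      · intro i j hij
        exact absurd (Subtype.ext (by
          have hi := i.2; have hj := j.2
          simp only [Set.mem_singleton_iff] at hi hj
          rw [hi, hj])) hij
    obtain ⟨B, hB⟩ := hON.exists_orthonormalBasis_extension_of_card_eq
      (by simp [finrank_euclideanSpace_fin])
    have hB0 : B i0 = x' := hB i0 rfl
    set L := B.repr.symm with hL
    have hS1 : MeasurableSet {b : Fin d → ℝ | 0 < ∑ i, b i * x i} :=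
      measurableSet_lt measurable_const (by fun_prop)
    have hpre : Lf L ⁻¹' {b : Fin d → ℝ | 0 < ∑ i, b i * x i}
        = (fun c : Fin d → ℝ => c i0) ⁻¹' Set.Ioi 0 := by
      ext c
      show (0 < ∑ i, (L (WithLp.toLp 2 c)) i * x i) ↔ 0 < c i0
      have : ∑ i, (L (WithLp.toLp 2 c)) i * x i = c i0 := by
        show ∑ i, (L (WithLp.toLp 2 c)) i * x' i = _
        rw [← hinner (L (WithLp.toLp 2 c)) x', ← hB0, ← OrthonormalBasis.repr_symm_single B i0, hL,
          LinearIsometryEquiv.inner_map_map]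
        rw [hinner]
        simp [EuclideanSpace.single, Pi.single_apply, mul_ite]
      rw [this]
    rw [← gauss_rot L hS1, hpre,
      ← Measure.map_apply (measurable_pi_apply i0) measurableSet_Ioi, gauss_one, gauss_half]
    congr 1
    rw [sub_zero, eq_div_iff (by positivity)]
    ring
  · rcases eq_or_lt_of_le (abs_le.mp habs).1 with h1 | hlt2
    · -- ρ = -1 : y = -x
      have h1' : ∑ i, x i * y i = -1 := h1.symm
      have hxy : x' = -y' := by
        rw [← inner_eq_one_iff_of_norm_eq_one (𝕜 := ℝ) hnx (by rw [norm_neg]; exact hny), inner_neg_right,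
          hinner]
        rw [h1']; ring
      have hyx : y = fun i => -x i := by
        have : y' = -x' := by rw [hxy, neg_neg]
        exact congrArg (fun v : EuclideanSpace ℝ (Fin d) => (v : Fin d → ℝ)) this
      have hset : {b : Fin d → ℝ | 0 < ∑ i, b i * x i ∧ 0 < ∑ i, b i * y i} = ∅ := by
        ext b
        simp only [Set.mem_setOf_eq, Set.mem_empty_iff_false, iff_false, not_and]
        intro hb1 hb2
        rw [hyx] at hb2
        simp only [mul_neg, Finset.sum_neg_distrib] at hb2
        linarith
      rw [hset, measure_empty, h1', Real.arccos_neg_one, sub_self, zero_div, ENNReal.ofReal_zero]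
    · -- main case -1 < ρ < 1
      have hρ1 : -1 < ∑ i, x i * y i := hlt2
      have hρ2 : (∑ i, x i * y i) < 1 := hlt1
      set ρ : ℝ := ∑ i, x i * y i with hρ
      have hs0 : 0 < Real.sqrt (1 - ρ ^ 2) := Real.sqrt_pos.mpr (by nlinarith)
      obtain ⟨n, rfl⟩ : ∃ n, d = n + 2 := by
        rcases d with _ | _ | n
        · exfalso; simp at hx
        · exfalso
          rw [Fin.sum_univ_one] at hx hy
          have : ρ = x 0 * y 0 := by rw [hρ, Fin.sum_univ_one]
          nlinarith
        · exact ⟨n, rfl⟩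
      have h01 : (0 : Fin (n + 2)) ≠ 1 := by simp [Fin.ext_iff]
      have hxx : (inner ℝ x' x') = 1 := by
        rw [hinner, ← hx]
        exact Finset.sum_congr rfl fun i _ => by ring
      have hxy' : (inner ℝ x' y') = ρ := hinner x' y'
      set s : ℝ := Real.sqrt (1 - ρ ^ 2) with hsdef
      set v' : EuclideanSpace ℝ (Fin (n + 2)) := s⁻¹ • (y' - ρ • x') with hv
      have hxv : (inner ℝ x' v') = 0 := by
        rw [hv, real_inner_smul_right, inner_sub_right, real_inner_smul_right, hxx, hxy']
        ring
      have hwnorm : ‖y' - ρ • x'‖ = s := by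
        have hsub : ‖y' - ρ • x'‖ ^ 2 = s ^ 2 := by
          rw [norm_sub_sq_real, real_inner_smul_right, real_inner_comm, hxy', norm_smul, hny, hnx]
          rw [hsdef, Real.sq_sqrt (by nlinarith)]
          simp only [Real.norm_eq_abs]
          rw [mul_pow, sq_abs]
          ring
        nlinarith [norm_nonneg (y' - ρ • x'), hs0]
      have hnv : ‖v'‖ = 1 := by
        rw [hv, norm_smul, hwnorm]
        simp only [Real.norm_eq_abs, abs_inv]
        rw [abs_of_pos hs0, inv_mul_cancel₀ hs0.ne']
      have hydec : y' = ρ • x' + s • v' := by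
        rw [hv, smul_smul, mul_inv_cancel₀ hs0.ne', one_smul]
        abel
      set g : Fin (n + 2) → EuclideanSpace ℝ (Fin (n + 2)) :=
        fun k => if k = 0 then x' else v' with hg
      have hON : Orthonormal ℝ (Set.restrict {0, 1} g) := by
        constructor
        · rintro ⟨i, hi⟩
          rcases hi with h | h
          · show ‖g i‖ = 1
            rw [h, hg]
            simp only [if_pos rfl]
            exact hnx
          · show ‖g i‖ = 1
            rw [Set.mem_singleton_iff] at h
            rw [h, hg]
            simp only [if_neg (Ne.symm h01)]
            exact hnv
        · rintro ⟨i, hi⟩ ⟨j, hj⟩ hij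
          have hij' : i ≠ j := fun h => hij (Subtype.ext h)
          show (inner ℝ (g i) (g j)) = 0
          rcases hi with h0 | h1 <;> rcases hj with h0' | h1'
          · exact absurd (h0.trans h0'.symm) hij'
          · rw [Set.mem_singleton_iff] at h1'
            rw [h0, h1', hg]
            simp only [if_pos rfl, if_neg (Ne.symm h01)]
            exact hxv
          · rw [Set.mem_singleton_iff] at h1
            rw [h0', h1, hg]
            simp only [if_pos rfl, if_neg (Ne.symm h01)]
            rw [real_inner_comm]
            exact hxv
          · rw [Set.mem_singleton_iff] at h1 h1'
            exact absurd (h1.trans h1'.symm) hij'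
      obtain ⟨B, hB⟩ := hON.exists_orthonormalBasis_extension_of_card_eq
        (by simp [finrank_euclideanSpace_fin])
      have hB0 : B 0 = x' := by
        have := hB 0 (by simp)
        simpa [hg] using this
      have hB1 : B 1 = v' := by
        have := hB 1 (by simp)
        exact this.trans (if_neg (Ne.symm h01))
      set L := B.repr.symm with hL
      have hcoord : ∀ (c : EuclideanSpace ℝ (Fin (n + 2))) (k : Fin (n + 2)),
          (inner ℝ (L c) (B k)) = c k := by
        intro c k
        rw [← OrthonormalBasis.repr_symm_single B k, hL, LinearIsometryEquiv.inner_map_map,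
          hinner]
        simp [EuclideanSpace.single, Pi.single_apply, mul_ite]
      set A : Set (ℝ × ℝ) := {p : ℝ × ℝ | 0 < p.1 ∧ 0 < ρ * p.1 + s * p.2} with hAdef
      have hA : MeasurableSet A := by
        have : A = {p : ℝ × ℝ | 0 < p.1} ∩ {p : ℝ × ℝ | 0 < ρ * p.1 + s * p.2} := rfl
        rw [this]
        exact (measurableSet_lt measurable_const measurable_fst).inter
          (measurableSet_lt measurable_const (by fun_prop))
      have hpre : Lf L ⁻¹' {b : Fin (n + 2) → ℝ | 0 < ∑ i, b i * x i ∧ 0 < ∑ i, b i * y i}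
          = (fun c : Fin (n + 2) → ℝ => (c 0, c 1)) ⁻¹' A := by
        ext c
        show (0 < ∑ i, (L (WithLp.toLp 2 c)) i * x i ∧ 0 < ∑ i, (L (WithLp.toLp 2 c)) i * y i)
          ↔ (0 < c 0 ∧ 0 < ρ * c 0 + s * c 1)
        have e1 : ∑ i, (L (WithLp.toLp 2 c)) i * x i = c 0 := by
          show ∑ i, (L (WithLp.toLp 2 c)) i * x' i = _
          rw [← hinner (L (WithLp.toLp 2 c)) x', ← hB0, hcoord]
        have e2 : ∑ i, (L (WithLp.toLp 2 c)) i * y i = ρ * c 0 + s * c 1 := by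
          show ∑ i, (L (WithLp.toLp 2 c)) i * y' i = _
          rw [← hinner (L (WithLp.toLp 2 c)) y', hydec, inner_add_right, real_inner_smul_right,
            real_inner_smul_right, ← hB0, ← hB1, hcoord, hcoord]
        rw [e1, e2]
      rw [← gauss_rot L hS, hpre,
        ← Measure.map_apply ((measurable_pi_apply 0).prodMk (measurable_pi_apply 1)) hA,
        gauss_pair h01, hAdef, hsdef, int2 hρ1 hρ2]
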